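/- Let σ > 0 and Υ > 0. For s ∈ ℝ and 1 ≤ i ≤ n set λ^n_i(s) = s²/n + 4Υ sin²[(π/2)·(2i−1)/(2n+1)]. Let (h_n) be a sequence of real numbers converging to h ∈ ℝ, and define δ^n_i = λ^n_i(σ + n^{−1/4}h_n)/λ^n_i(σ) − 1 for 1 ≤ i ≤ n. Then sup_{1≤i≤n} |δ^n_i| → 0 and Σ_{i=1}^n (δ^n_i)² → h²/(σ√Υ) as n→∞. -/

import Mathlib

open Real Filter

/-- The eigenvalues of the covariance matrix of noisy Gaussian increments at volatility `s`. -/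
noncomputable def lamEig (Υ : ℝ) (n : ℕ) (i : ℕ) (s : ℝ) : ℝ :=
  s ^ 2 / n + 4 * Υ * Real.sin (π / 2 * ((2 * (i : ℝ) - 1) / (2 * (n : ℝ) + 1))) ^ 2

open MeasureTheory Set Topology

noncomputable def Dden (σ Υ : ℝ) (n i : ℕ) : ℝ :=
  σ ^ 2 + 4 * Υ * (n : ℝ) * Real.sin (π / 2 * ((2 * (i : ℝ) - 1) / (2 * (n : ℝ) + 1))) ^ 2

noncomputable def Ffun (σ Υ : ℝ) (n : ℕ) (u : ℝ) : ℝ :=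
  ∑ i ∈ Finset.Icc 1 n,
    (Set.Ioc (((i : ℝ) - 1) / Real.sqrt n) ((i : ℝ) / Real.sqrt n)).indicator
      (fun _ => ((Dden σ Υ n i) ^ 2)⁻¹) u

noncomputable def θf (u : ℝ) (n : ℕ) : ℝ :=
  π / 2 * ((2 * ((⌈u * Real.sqrt n⌉₊ : ℕ) : ℝ) - 1) / (2 * (n : ℝ) + 1))

lemma Dden_ge {σ Υ : ℝ} (hΥ : 0 < Υ) (n i : ℕ) : σ ^ 2 ≤ Dden σ Υ n i := by
  have : 0 ≤ 4 * Υ * (n : ℝ) * Real.sin (π / 2 * ((2 * (i : ℝ) - 1) / (2 * (n : ℝ) + 1))) ^ 2 := by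
    positivity
  unfold Dden; linarith

lemma Dden_pos {σ Υ : ℝ} (hσ : 0 < σ) (hΥ : 0 < Υ) (n i : ℕ) : 0 < Dden σ Υ n i :=
  lt_of_lt_of_le (by positivity) (Dden_ge hΥ n i)

/-- `∫_0^∞ du/(σ²+b²u²)² = π/(4σ³b)`, with integrability. -/
lemma intAux {σ b : ℝ} (hσ : 0 < σ) (hb : 0 < b) :
    IntegrableOn (fun u : ℝ => ((σ ^ 2 + b ^ 2 * u ^ 2) ^ 2)⁻¹) (Set.Ioi 0) ∧
    ∫ u in Set.Ioi (0 : ℝ), ((σ ^ 2 + b ^ 2 * u ^ 2) ^ 2)⁻¹ = π / (4 * σ ^ 3 * b) := by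
  set F : ℝ → ℝ := fun u => u / (2 * σ ^ 2 * (σ ^ 2 + b ^ 2 * u ^ 2))
      + Real.arctan (b * u / σ) / (2 * σ ^ 3 * b) with hF
  have hden : ∀ u : ℝ, 0 < σ ^ 2 + b ^ 2 * u ^ 2 := fun u => by positivity
  have hderiv : ∀ u : ℝ, HasDerivAt F (((σ ^ 2 + b ^ 2 * u ^ 2) ^ 2)⁻¹) u := by
    intro u
    have h2 : HasDerivAt (fun u : ℝ => 2 * σ ^ 2 * (σ ^ 2 + b ^ 2 * u ^ 2))
        (2 * σ ^ 2 * (b ^ 2 * (2 * u))) u := by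
      have h0 : HasDerivAt (fun u : ℝ => σ ^ 2 + b ^ 2 * u ^ 2) (b ^ 2 * (2 * u)) u := by
        simpa using (((hasDerivAt_pow 2 u).const_mul (b ^ 2)).const_add (σ ^ 2))
      exact h0.const_mul (2 * σ ^ 2)
    have h1 : HasDerivAt (fun u : ℝ => u / (2 * σ ^ 2 * (σ ^ 2 + b ^ 2 * u ^ 2)))
        ((1 * (2 * σ ^ 2 * (σ ^ 2 + b ^ 2 * u ^ 2)) - u * (2 * σ ^ 2 * (b ^ 2 * (2 * u))))
          / (2 * σ ^ 2 * (σ ^ 2 + b ^ 2 * u ^ 2)) ^ 2) u :=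
      (hasDerivAt_id u).div h2 (by positivity)
    have hinner : HasDerivAt (fun u : ℝ => b * u / σ) (b / σ) u := by
      simpa using ((hasDerivAt_id u).const_mul b).div_const σ
    have harc : HasDerivAt (fun u : ℝ => Real.arctan (b * u / σ))
        ((1 / (1 + (b * u / σ) ^ 2)) * (b / σ)) u :=
      (Real.hasDerivAt_arctan _).comp u hinner
    have hsum := h1.add (harc.div_const (2 * σ ^ 3 * b))
    refine hsum.congr_deriv ?_
    have h1d : (1 + (b * u / σ) ^ 2) ≠ 0 := by positivity
    field_simp
    ring
  have hcont : ContinuousWithinAt F (Set.Ici 0) 0 :=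
    (hderiv 0).continuousAt.continuousWithinAt
  have hlim : Tendsto F atTop (𝓝 (π / (4 * σ ^ 3 * b))) := by
    have t1 : Tendsto (fun u : ℝ => u / (2 * σ ^ 2 * (σ ^ 2 + b ^ 2 * u ^ 2))) atTop (𝓝 0) := by
      have hub : ∀ᶠ u : ℝ in atTop,
          u / (2 * σ ^ 2 * (σ ^ 2 + b ^ 2 * u ^ 2)) ≤ (2 * σ ^ 2 * b ^ 2)⁻¹ * u⁻¹ := by
        filter_upwards [eventually_gt_atTop 0] with u hu
        have h1 : u / (2 * σ ^ 2 * (σ ^ 2 + b ^ 2 * u ^ 2)) ≤ u / (2 * σ ^ 2 * (b ^ 2 * u ^ 2)) := by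
          gcongr
          nlinarith [sq_nonneg σ]
        have h2 : u / (2 * σ ^ 2 * (b ^ 2 * u ^ 2)) = (2 * σ ^ 2 * b ^ 2)⁻¹ * u⁻¹ := by
          field_simp
        linarith
      have hlb : ∀ᶠ u : ℝ in atTop, 0 ≤ u / (2 * σ ^ 2 * (σ ^ 2 + b ^ 2 * u ^ 2)) := by
        filter_upwards [eventually_ge_atTop 0] with u hu
        positivity
      have hub0 : Tendsto (fun u : ℝ => (2 * σ ^ 2 * b ^ 2)⁻¹ * u⁻¹) atTop (𝓝 0) := by
        have h0 := Tendsto.const_mul ((2 * σ ^ 2 * b ^ 2)⁻¹) tendsto_inv_atTop_zero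
        rw [mul_zero] at h0
        exact h0
      exact tendsto_of_tendsto_of_tendsto_of_le_of_le' tendsto_const_nhds hub0 hlb hub
    have t2 : Tendsto (fun u : ℝ => Real.arctan (b * u / σ) / (2 * σ ^ 3 * b)) atTop
        (𝓝 ((π / 2) / (2 * σ ^ 3 * b))) := by
      have hin : Tendsto (fun u : ℝ => b * u / σ) atTop atTop :=
        (tendsto_id.const_mul_atTop hb).atTop_div_const hσ
      exact ((Real.tendsto_arctan_atTop.mono_right nhdsWithin_le_nhds).comp hin).div_const _
    have hadd := t1.add t2
    have hval : (0 : ℝ) + (π / 2) / (2 * σ ^ 3 * b) = π / (4 * σ ^ 3 * b) := by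
      rw [zero_add, div_div, show (2:ℝ) * (2 * σ ^ 3 * b) = 4 * σ ^ 3 * b by ring]
    rw [hval] at hadd
    exact hadd
  have hF0 : F 0 = 0 := by simp [hF]
  constructor
  · exact integrableOn_Ioi_deriv_of_nonneg hcont (fun x _ => hderiv x)
      (fun x _ => by positivity) hlim
  · rw [integral_Ioi_of_hasDerivAt_of_nonneg hcont (fun x _ => hderiv x)
      (fun x _ => by positivity) hlim, hF0, sub_zero]

lemma mem_Ioc_iff {n i : ℕ} (hn : 1 ≤ n) (hi : 1 ≤ i) {u : ℝ} (hu : 0 < u) :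
    u ∈ Set.Ioc (((i : ℝ) - 1) / Real.sqrt n) ((i : ℝ) / Real.sqrt n)
      ↔ ⌈u * Real.sqrt n⌉₊ = i := by
  have hs : 0 < Real.sqrt n := Real.sqrt_pos.2 (by exact_mod_cast hn)
  rw [Set.mem_Ioc, div_lt_iff₀ hs, le_div_iff₀ hs, Nat.ceil_eq_iff (by omega),
    Nat.cast_sub hi, Nat.cast_one]

lemma Ffun_eval (σ Υ : ℝ) {n : ℕ} (hn : 1 ≤ n) {u : ℝ} (hu : 0 < u) :
    Ffun σ Υ n u = if ⌈u * Real.sqrt n⌉₊ ∈ Finset.Icc 1 n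
      then ((Dden σ Υ n ⌈u * Real.sqrt n⌉₊) ^ 2)⁻¹ else 0 := by
  unfold Ffun
  split_ifs with hc
  · rw [Finset.sum_eq_single_of_mem _ hc]
    · rw [Set.indicator_of_mem]
      exact (mem_Ioc_iff hn (Finset.mem_Icc.1 hc).1 hu).2 rfl
    · intro j hj hne
      apply Set.indicator_of_notMem
      intro hmem
      exact hne ((mem_Ioc_iff hn (Finset.mem_Icc.1 hj).1 hu).1 hmem).symm
  · refine Finset.sum_eq_zero fun j hj => ?_
    apply Set.indicator_of_notMem
    intro hmem
    have hceil := (mem_Ioc_iff hn (Finset.mem_Icc.1 hj).1 hu).1 hmem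
    exact hc (by rw [hceil]; exact hj)

lemma Ffun_integral (σ Υ : ℝ) (n : ℕ) :
    ∫ u in Set.Ioi (0 : ℝ), Ffun σ Υ n u
      = ∑ i ∈ Finset.Icc 1 n, (Real.sqrt n)⁻¹ * ((Dden σ Υ n i) ^ 2)⁻¹ := by
  rcases Nat.eq_zero_or_pos n with rfl | hn
  · simp [Ffun]
  have hs : 0 < Real.sqrt n := Real.sqrt_pos.2 (by exact_mod_cast hn)
  unfold Ffun
  rw [integral_finset_sum]
  · refine Finset.sum_congr rfl fun i hi => ?_
    obtain ⟨hi1, hi2⟩ := Finset.mem_Icc.1 hi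
    have hi1' : (1 : ℝ) ≤ (i : ℝ) := by exact_mod_cast hi1
    have ha : (0 : ℝ) ≤ ((i : ℝ) - 1) / Real.sqrt n :=
      div_nonneg (by linarith) hs.le
    rw [setIntegral_indicator measurableSet_Ioc]
    have hinter : Set.Ioi (0 : ℝ) ∩ Set.Ioc (((i : ℝ) - 1) / Real.sqrt n) ((i : ℝ) / Real.sqrt n)
        = Set.Ioc (((i : ℝ) - 1) / Real.sqrt n) ((i : ℝ) / Real.sqrt n) := by
      apply Set.inter_eq_right.mpr
      intro x hx
      exact lt_of_le_of_lt ha hx.1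
    have hba : (i : ℝ) / Real.sqrt n - ((i : ℝ) - 1) / Real.sqrt n = (Real.sqrt n)⁻¹ := by
      rw [div_sub_div_same, sub_sub_cancel, one_div]
    rw [hinter, setIntegral_const, measureReal_def, Real.volume_Ioc, ENNReal.toReal_ofReal (by rw [hba]; positivity),
      hba, smul_eq_mul]
  · intro i _
    refine (integrable_indicator_iff measurableSet_Ioc).2 ?_
    refine integrableOn_const (ne_of_lt ?_)
    refine lt_of_le_of_lt ?_
      (?_ : volume (Set.Ioc (((i : ℝ) - 1) / Real.sqrt n) ((i : ℝ) / Real.sqrt n)) < ⊤)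
    · rw [Measure.restrict_apply measurableSet_Ioc]
      exact measure_mono Set.inter_subset_left
    · rw [Real.volume_Ioc]; exact ENNReal.ofReal_lt_top

lemma Ffun_bound {σ Υ : ℝ} (hσ : 0 < σ) (hΥ : 0 < Υ) (n : ℕ) {u : ℝ} (hu : 0 < u) :
    ‖Ffun σ Υ n u‖ ≤ ((σ ^ 2 + (2 * Real.sqrt Υ / 3) ^ 2 * u ^ 2) ^ 2)⁻¹ := by
  have hA : 0 < σ ^ 2 + (2 * Real.sqrt Υ / 3) ^ 2 * u ^ 2 := by positivity
  rcases Nat.eq_zero_or_pos n with rfl | hn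
  · have : Ffun σ Υ 0 u = 0 := by simp [Ffun]
    rw [this, norm_zero]
    positivity
  rw [Ffun_eval σ Υ hn hu]
  split_ifs with hc
  · set i := ⌈u * Real.sqrt n⌉₊ with hidef
    obtain ⟨hi1, hi2⟩ := Finset.mem_Icc.1 hc
    have hm : (1 : ℝ) ≤ (n : ℝ) := by exact_mod_cast hn
    have hi1' : (1 : ℝ) ≤ (i : ℝ) := by exact_mod_cast hi1
    have hi2' : (i : ℝ) ≤ (n : ℝ) := by exact_mod_cast hi2
    set θ := π / 2 * ((2 * (i : ℝ) - 1) / (2 * (n : ℝ) + 1)) with hθdef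
    have hθ0 : 0 ≤ θ := by
      apply mul_nonneg (by positivity)
      apply div_nonneg (by linarith) (by linarith)
    have hθπ : θ ≤ π / 2 := by
      have h1 : (2 * (i : ℝ) - 1) / (2 * (n : ℝ) + 1) ≤ 1 := by
        rw [div_le_one (by linarith)]; linarith
      calc θ ≤ π / 2 * 1 := mul_le_mul_of_nonneg_left h1 (by positivity)
        _ = π / 2 := mul_one _
    have hsin := Real.mul_le_sin hθ0 hθπ
    have h2 : 2 / π * θ = (2 * (i : ℝ) - 1) / (2 * (n : ℝ) + 1) := by
      rw [hθdef]; field_simp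
    have h3 : (i : ℝ) / (3 * (n : ℝ)) ≤ (2 * (i : ℝ) - 1) / (2 * (n : ℝ) + 1) := by
      rw [div_le_div_iff₀ (by linarith) (by linarith)]
      nlinarith
    have h4 : (i : ℝ) / (3 * (n : ℝ)) ≤ Real.sin θ := by rw [h2] at hsin; linarith
    have h4' : (i : ℝ) ≤ 3 * (n : ℝ) * Real.sin θ := by
      rw [div_le_iff₀ (by linarith)] at h4; linarith
    have h5 : u * Real.sqrt n ≤ (i : ℝ) := Nat.le_ceil _
    have h6 : u ^ 2 * (n : ℝ) ≤ (i : ℝ) ^ 2 := by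
      have hsq : Real.sqrt (n : ℝ) ^ 2 = (n : ℝ) := Real.sq_sqrt (by linarith)
      nlinarith [Real.sqrt_nonneg (n : ℝ),
        mul_pos hu (Real.sqrt_pos.2 (show (0:ℝ) < n by linarith))]
    have hsin0 : 0 ≤ Real.sin θ := le_trans (by positivity) h4
    have hsq2 : (i : ℝ) ^ 2 ≤ (3 * (n : ℝ) * Real.sin θ) ^ 2 :=
      pow_le_pow_left₀ (by linarith) h4' 2
    have h9 : u ^ 2 * (n : ℝ) ≤ 9 * (n : ℝ) ^ 2 * Real.sin θ ^ 2 := by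
      have hexp : (3 * (n : ℝ) * Real.sin θ) ^ 2 = 9 * (n : ℝ) ^ 2 * Real.sin θ ^ 2 := by ring
      linarith
    have h10 : u ^ 2 ≤ 9 * (n : ℝ) * Real.sin θ ^ 2 := by
      have h9' : (n : ℝ) * u ^ 2 ≤ (n : ℝ) * (9 * (n : ℝ) * Real.sin θ ^ 2) := by
        have hexp : (n : ℝ) * (9 * (n : ℝ) * Real.sin θ ^ 2)
            = 9 * (n : ℝ) ^ 2 * Real.sin θ ^ 2 := by ring
        linarith
      exact le_of_mul_le_mul_left h9' (by linarith)
    have key : σ ^ 2 + (2 * Real.sqrt Υ / 3) ^ 2 * u ^ 2 ≤ Dden σ Υ n i := by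
      have hsq : (2 * Real.sqrt Υ / 3) ^ 2 = 4 * Υ / 9 := by
        rw [div_pow, mul_pow, Real.sq_sqrt hΥ.le]
        norm_num
      rw [hsq]
      unfold Dden
      rw [← hθdef]
      have h11 : 4 * Υ / 9 * u ^ 2 ≤ 4 * Υ / 9 * (9 * (n : ℝ) * Real.sin θ ^ 2) :=
        mul_le_mul_of_nonneg_left h10 (by positivity)
      have h12 : 4 * Υ / 9 * (9 * (n : ℝ) * Real.sin θ ^ 2)
          = 4 * Υ * (n : ℝ) * Real.sin θ ^ 2 := by ring
      linarith
    rw [Real.norm_eq_abs, abs_of_nonneg (by positivity)]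
    exact inv_anti₀ (by positivity) (pow_le_pow_left₀ hA.le key 2)
  · rw [norm_zero]; positivity

lemma Ffun_tendsto {σ Υ : ℝ} (hσ : 0 < σ) (hΥ : 0 < Υ) {u : ℝ} (hu : 0 < u) :
    Tendsto (fun n => Ffun σ Υ n u) atTop
      (𝓝 (((σ ^ 2 + (π * Real.sqrt Υ) ^ 2 * u ^ 2) ^ 2)⁻¹)) := by
  have hs : Tendsto (fun n : ℕ => Real.sqrt n) atTop atTop := by
    have h1 : Tendsto (fun x : ℝ => x ^ ((1:ℝ) / 2)) atTop atTop :=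
      tendsto_rpow_atTop (by norm_num)
    have h2 := h1.comp (tendsto_natCast_atTop_atTop (R := ℝ))
    refine h2.congr fun n => ?_
    simp only [Function.comp_apply]
    rw [Real.sqrt_eq_rpow]
  have hspos : ∀ n : ℕ, 1 ≤ n → 0 < Real.sqrt n := fun n hn =>
    Real.sqrt_pos.2 (by exact_mod_cast hn)
  have h1 : Tendsto (fun n : ℕ => ((⌈u * Real.sqrt n⌉₊ : ℕ) : ℝ) / Real.sqrt n) atTop (𝓝 u) := by
    have hub : ∀ᶠ n : ℕ in atTop,
        ((⌈u * Real.sqrt n⌉₊ : ℕ) : ℝ) / Real.sqrt n ≤ u + (Real.sqrt n)⁻¹ := by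
      filter_upwards [eventually_ge_atTop 1] with n hn
      have hsp := hspos n hn
      rw [div_le_iff₀ hsp]
      have hlt : ((⌈u * Real.sqrt n⌉₊ : ℕ) : ℝ) < (u + (Real.sqrt n)⁻¹) * Real.sqrt n := by
        have hc1 := Nat.ceil_lt_add_one (by positivity : (0:ℝ) ≤ u * Real.sqrt n)
        have hss : (Real.sqrt (n:ℝ))⁻¹ * Real.sqrt n = 1 := inv_mul_cancel₀ hsp.ne'
        calc ((⌈u * Real.sqrt n⌉₊ : ℕ) : ℝ) < u * Real.sqrt n + 1 := hc1
          _ = (u + (Real.sqrt n)⁻¹) * Real.sqrt n := by rw [add_mul, hss]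
      exact hlt.le
    have hlb : ∀ᶠ n : ℕ in atTop, u ≤ ((⌈u * Real.sqrt n⌉₊ : ℕ) : ℝ) / Real.sqrt n := by
      filter_upwards [eventually_ge_atTop 1] with n hn
      rw [le_div_iff₀ (hspos n hn)]
      exact Nat.le_ceil _
    have hub0 : Tendsto (fun n : ℕ => u + (Real.sqrt n)⁻¹) atTop (𝓝 u) := by
      simpa using tendsto_const_nhds.add hs.inv_tendsto_atTop
    exact tendsto_of_tendsto_of_tendsto_of_le_of_le' tendsto_const_nhds hub0 hlb hub
  have h2 : Tendsto (fun n : ℕ => (n : ℝ) / (2 * (n : ℝ) + 1)) atTop (𝓝 (1 / 2)) := by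
    have heq : ∀ᶠ n : ℕ in atTop, (2 + ((n : ℝ))⁻¹)⁻¹ = (n : ℝ) / (2 * (n : ℝ) + 1) := by
      filter_upwards [eventually_ge_atTop 1] with n hn
      have hn' : (0 : ℝ) < n := by exact_mod_cast hn
      have hrep : (2 + ((n:ℝ))⁻¹) = (2 * (n:ℝ) + 1) / (n:ℝ) := by
        field_simp
      rw [hrep, inv_div]
    have hl : Tendsto (fun n : ℕ => (2 + ((n : ℝ))⁻¹)⁻¹) atTop (𝓝 ((2 + 0)⁻¹)) :=
      (tendsto_const_nhds.add (tendsto_natCast_atTop_atTop (R := ℝ)).inv_tendsto_atTop).inv₀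
        (by norm_num)
    rw [show ((2:ℝ) + 0)⁻¹ = 1 / 2 by norm_num] at hl
    exact hl.congr' heq
  have h3 : Tendsto (fun n : ℕ => Real.sqrt n * θf u n) atTop (𝓝 (π / 2 * u)) := by
    have heq : ∀ᶠ n : ℕ in atTop, π / 2 * ((2 * (((⌈u * Real.sqrt n⌉₊ : ℕ) : ℝ) / Real.sqrt n)
        - (Real.sqrt n)⁻¹) * ((n : ℝ) / (2 * (n : ℝ) + 1))) = Real.sqrt n * θf u n := by
      filter_upwards [eventually_ge_atTop 1] with n hn
      have hsp := hspos n hn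
      unfold θf
      have hss : Real.sqrt (n:ℝ) * Real.sqrt (n:ℝ) = (n : ℝ) :=
        Real.mul_self_sqrt (Nat.cast_nonneg n)
      generalize hgen : Real.sqrt (n:ℝ) = t at hss hsp ⊢
      rw [← hss]
      have h2n : 2 * (t * t) + 1 ≠ 0 := by positivity
      field_simp
    have hl : Tendsto (fun n : ℕ => π / 2 * ((2 * (((⌈u * Real.sqrt n⌉₊ : ℕ) : ℝ) / Real.sqrt n)
        - (Real.sqrt n)⁻¹) * ((n : ℝ) / (2 * (n : ℝ) + 1)))) atTop
        (𝓝 (π / 2 * ((2 * u - 0) * (1 / 2)))) :=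
      tendsto_const_nhds.mul (((h1.const_mul 2).sub hs.inv_tendsto_atTop).mul h2)
    rw [show π / 2 * ((2 * u - 0) * (1 / 2)) = π / 2 * u by ring] at hl
    exact hl.congr' heq
  have hθpos : ∀ n : ℕ, 1 ≤ n → 0 < θf u n := by
    intro n hn
    have hip : 1 ≤ ⌈u * Real.sqrt n⌉₊ := Nat.one_le_ceil_iff.2 (mul_pos hu (hspos n hn))
    have hip' : (1 : ℝ) ≤ ((⌈u * Real.sqrt n⌉₊ : ℕ) : ℝ) := by exact_mod_cast hip
    have hnn : (0:ℝ) ≤ (n:ℝ) := Nat.cast_nonneg n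
    unfold θf
    apply mul_pos (by positivity)
    apply div_pos (by linarith) (by linarith)
  have h4 : Tendsto (θf u) atTop (𝓝 0) := by
    have heq : ∀ᶠ n : ℕ in atTop, (Real.sqrt n)⁻¹ * (Real.sqrt n * θf u n) = θf u n := by
      filter_upwards [eventually_ge_atTop 1] with n hn
      rw [← mul_assoc, inv_mul_cancel₀ (hspos n hn).ne', one_mul]
    have hl : Tendsto (fun n : ℕ => (Real.sqrt n)⁻¹ * (Real.sqrt n * θf u n)) atTop
        (𝓝 (0 * (π / 2 * u))) := hs.inv_tendsto_atTop.mul h3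
    rw [zero_mul] at hl
    exact hl.congr' heq
  have h6 : Tendsto (fun n => Real.sin (θf u n) / θf u n) atTop (𝓝 1) := by
    have hd : HasDerivAt Real.sin 1 0 := by simpa using Real.hasDerivAt_sin 0
    rw [hasDerivAt_iff_tendsto_slope] at hd
    have hθne : Tendsto (θf u) atTop (𝓝[≠] 0) := by
      rw [tendsto_nhdsWithin_iff]
      refine ⟨h4, ?_⟩
      filter_upwards [eventually_ge_atTop 1] with n hn
      exact (hθpos n hn).ne'
    have hcomp := hd.comp hθne
    refine hcomp.congr fun n => ?_
    simp [Function.comp, slope_def_field]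
  have h7 : Tendsto (fun n : ℕ => Real.sqrt n * Real.sin (θf u n)) atTop (𝓝 (π / 2 * u)) := by
    have heq : ∀ᶠ n : ℕ in atTop,
        Real.sqrt n * θf u n * (Real.sin (θf u n) / θf u n)
          = Real.sqrt n * Real.sin (θf u n) := by
      filter_upwards [eventually_ge_atTop 1] with n hn
      have hθn := (hθpos n hn).ne'
      field_simp
    have hl : Tendsto (fun n : ℕ => Real.sqrt n * θf u n * (Real.sin (θf u n) / θf u n)) atTop
        (𝓝 (π / 2 * u * 1)) := h3.mul h6
    rw [mul_one] at hl
    exact hl.congr' heq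
  have h8 : Tendsto (fun n : ℕ => Dden σ Υ n ⌈u * Real.sqrt n⌉₊) atTop
      (𝓝 (σ ^ 2 + 4 * Υ * (π / 2 * u) ^ 2)) := by
    have heq : ∀ᶠ n : ℕ in atTop,
        σ ^ 2 + 4 * Υ * (Real.sqrt n * Real.sin (θf u n)) ^ 2
          = Dden σ Υ n ⌈u * Real.sqrt n⌉₊ := by
      filter_upwards [eventually_ge_atTop 1] with n hn
      unfold Dden θf
      rw [mul_pow, Real.sq_sqrt (Nat.cast_nonneg n)]
      ring
    have hl : Tendsto (fun n : ℕ => σ ^ 2 + 4 * Υ * (Real.sqrt n * Real.sin (θf u n)) ^ 2) atTop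
        (𝓝 (σ ^ 2 + 4 * Υ * (π / 2 * u) ^ 2)) :=
      tendsto_const_nhds.add ((h7.pow 2).const_mul (4 * Υ))
    exact hl.congr' heq
  have h9 : Tendsto (fun n : ℕ => ((Dden σ Υ n ⌈u * Real.sqrt n⌉₊) ^ 2)⁻¹) atTop
      (𝓝 (((σ ^ 2 + 4 * Υ * (π / 2 * u) ^ 2) ^ 2)⁻¹)) :=
    (h8.pow 2).inv₀ (by positivity)
  have hval : σ ^ 2 + 4 * Υ * (π / 2 * u) ^ 2 = σ ^ 2 + (π * Real.sqrt Υ) ^ 2 * u ^ 2 := by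
    rw [mul_pow π (Real.sqrt Υ) 2, Real.sq_sqrt hΥ.le]
    ring
  rw [← hval]
  have hev : ∀ᶠ n : ℕ in atTop,
      ((Dden σ Υ n ⌈u * Real.sqrt n⌉₊) ^ 2)⁻¹ = Ffun σ Υ n u := by
    filter_upwards [eventually_ge_atTop 1, hs.eventually_ge_atTop u] with n hn hun
    have hmem : ⌈u * Real.sqrt n⌉₊ ∈ Finset.Icc 1 n := by
      rw [Finset.mem_Icc]
      constructor
      · exact Nat.one_le_ceil_iff.2 (mul_pos hu (hspos n hn))
      · apply Nat.ceil_le.2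
        calc u * Real.sqrt n ≤ Real.sqrt n * Real.sqrt n :=
              mul_le_mul_of_nonneg_right hun (Real.sqrt_nonneg _)
          _ = (n : ℝ) := Real.mul_self_sqrt (Nat.cast_nonneg n)
    rw [Ffun_eval σ Υ hn hu, if_pos hmem]
  exact h9.congr' hev

lemma T_tendsto {σ Υ : ℝ} (hσ : 0 < σ) (hΥ : 0 < Υ) :
    Tendsto (fun n : ℕ => ∑ i ∈ Finset.Icc 1 n, (Real.sqrt n)⁻¹ * ((Dden σ Υ n i) ^ 2)⁻¹)
      atTop (𝓝 (1 / (4 * σ ^ 3 * Real.sqrt Υ))) := by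
  have hb1 : (0:ℝ) < 2 * Real.sqrt Υ / 3 := by positivity
  have hb2 : (0:ℝ) < π * Real.sqrt Υ := by positivity
  obtain ⟨hInt1, _⟩ := intAux hσ hb1
  obtain ⟨hInt2, hVal2⟩ := intAux hσ hb2
  have hmeas : ∀ n, AEStronglyMeasurable (Ffun σ Υ n) (volume.restrict (Set.Ioi 0)) := by
    intro n
    apply Measurable.aestronglyMeasurable
    apply Finset.measurable_sum
    intro i _
    exact measurable_const.indicator measurableSet_Ioc
  have hDCT := tendsto_integral_of_dominated_convergence
      (μ := volume.restrict (Set.Ioi (0:ℝ)))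
      (F := fun n => Ffun σ Υ n)
      (f := fun u => ((σ ^ 2 + (π * Real.sqrt Υ) ^ 2 * u ^ 2) ^ 2)⁻¹)
      (fun u => ((σ ^ 2 + (2 * Real.sqrt Υ / 3) ^ 2 * u ^ 2) ^ 2)⁻¹)
      hmeas hInt1
      (fun n => (ae_restrict_iff' measurableSet_Ioi).2
        (Eventually.of_forall fun u hu => Ffun_bound hσ hΥ n hu))
      ((ae_restrict_iff' measurableSet_Ioi).2
        (Eventually.of_forall fun u hu => Ffun_tendsto hσ hΥ hu))
  have hval : (∫ u in Set.Ioi (0:ℝ), ((σ ^ 2 + (π * Real.sqrt Υ) ^ 2 * u ^ 2) ^ 2)⁻¹)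
      = 1 / (4 * σ ^ 3 * Real.sqrt Υ) := by
    rw [hVal2, div_eq_div_iff (by positivity) (by positivity)]
    ring
  rw [← hval]
  exact hDCT.congr fun n => Ffun_integral σ Υ n

/-- With `δ^n_i = λ^n_i(σ + n^{-1/4} h_n)/λ^n_i(σ) - 1` for a sequence `h_n → h`,
one has `sup_{1≤i≤n} |δ^n_i| → 0` and `Σ_{i=1}^n (δ^n_i)² → h²/(σ√Υ)` as `n → ∞`. -/
theorem stmt6 (σ Υ : ℝ) (hσ : 0 < σ) (hΥ : 0 < Υ)
    (hseq : ℕ → ℝ) (h : ℝ) (hh : Tendsto hseq atTop (nhds h))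
    (δ : ℕ → ℕ → ℝ)
    (hδ : ∀ n i, δ n i =
      lamEig Υ n i (σ + (n : ℝ) ^ (-(1 / 4) : ℝ) * hseq n) / lamEig Υ n i σ - 1) :
    Tendsto (fun n : ℕ => ⨆ i ∈ Finset.Icc 1 n, |δ n i|) atTop (nhds 0) ∧
    Tendsto (fun n : ℕ => ∑ i ∈ Finset.Icc 1 n, (δ n i) ^ 2) atTop
      (nhds (h ^ 2 / (σ * Real.sqrt Υ))) := by
  have hεnn : ∀ n : ℕ, 0 ≤ (n : ℝ) ^ (-(1 / 4) : ℝ) := fun n =>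
    Real.rpow_nonneg (Nat.cast_nonneg n) _
  have hε0 : Tendsto (fun n : ℕ => (n : ℝ) ^ (-(1 / 4) : ℝ)) atTop (𝓝 0) :=
    (tendsto_rpow_neg_atTop (by norm_num)).comp (tendsto_natCast_atTop_atTop (R := ℝ))
  have hcL : Tendsto (fun n : ℕ => 2 * σ * hseq n + (n : ℝ) ^ (-(1 / 4) : ℝ) * (hseq n) ^ 2)
      atTop (𝓝 (2 * σ * h)) := by
    have h1 : Tendsto (fun n : ℕ => 2 * σ * hseq n) atTop (𝓝 (2 * σ * h)) :=
      hh.const_mul (2 * σ)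
    have h2' : Tendsto (fun n : ℕ => (n : ℝ) ^ (-(1 / 4) : ℝ) * (hseq n) ^ 2) atTop
        (𝓝 (0 * h ^ 2)) := hε0.mul (hh.pow 2)
    rw [zero_mul] at h2'
    simpa using h1.add h2'
  have hδ' : ∀ n : ℕ, 1 ≤ n → ∀ i, δ n i
      = (n : ℝ) ^ (-(1 / 4) : ℝ)
        * (2 * σ * hseq n + (n : ℝ) ^ (-(1 / 4) : ℝ) * (hseq n) ^ 2) / Dden σ Υ n i := by
    intro n hn i
    rw [hδ]
    have hn0 : ((n : ℝ)) ≠ 0 := Nat.cast_ne_zero.2 (by omega)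
    have hn0' : (0 : ℝ) < n := by exact_mod_cast hn
    have hlam : (0:ℝ) < σ ^ 2 / n
        + 4 * Υ * Real.sin (π / 2 * ((2 * (i:ℝ) - 1) / (2 * (n:ℝ) + 1))) ^ 2 := by
      positivity
    have hD := Dden_pos hσ hΥ n i
    unfold lamEig Dden at *
    field_simp
    ring
  constructor
  · have hub : ∀ᶠ n : ℕ in atTop,
        (⨆ i ∈ Finset.Icc 1 n, |δ n i|) ≤ (n : ℝ) ^ (-(1 / 4) : ℝ)
          * |2 * σ * hseq n + (n : ℝ) ^ (-(1 / 4) : ℝ) * (hseq n) ^ 2| / σ ^ 2 := by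
      filter_upwards [eventually_ge_atTop 1] with n hn
      have hbnn : 0 ≤ (n : ℝ) ^ (-(1 / 4) : ℝ)
          * |2 * σ * hseq n + (n : ℝ) ^ (-(1 / 4) : ℝ) * (hseq n) ^ 2| / σ ^ 2 :=
        div_nonneg (mul_nonneg (hεnn n) (abs_nonneg _)) (sq_nonneg σ)
      refine Real.iSup_le (fun i => Real.iSup_le (fun _ => ?_) hbnn) hbnn
      rw [hδ' n hn i, abs_div, abs_of_pos (Dden_pos hσ hΥ n i), abs_mul,
        abs_of_nonneg (hεnn n)]
      exact div_le_div_of_nonneg_left (mul_nonneg (hεnn n) (abs_nonneg _)) (by positivity)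
        (Dden_ge hΥ n i)
    have hlb : ∀ n : ℕ, 0 ≤ ⨆ i ∈ Finset.Icc 1 n, |δ n i| := fun n =>
      Real.iSup_nonneg fun i => Real.iSup_nonneg fun _ => abs_nonneg _
    have hbT : Tendsto (fun n : ℕ => (n : ℝ) ^ (-(1 / 4) : ℝ)
        * |2 * σ * hseq n + (n : ℝ) ^ (-(1 / 4) : ℝ) * (hseq n) ^ 2| / σ ^ 2) atTop (𝓝 0) := by
      have := (hε0.mul hcL.abs).div_const (σ ^ 2)
      simpa using this
    exact tendsto_of_tendsto_of_tendsto_of_le_of_le' tendsto_const_nhds hbT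
      (Eventually.of_forall hlb) hub
  · have hsum : ∀ᶠ n : ℕ in atTop,
        (2 * σ * hseq n + (n : ℝ) ^ (-(1 / 4) : ℝ) * (hseq n) ^ 2) ^ 2
          * (∑ i ∈ Finset.Icc 1 n, (Real.sqrt n)⁻¹ * ((Dden σ Υ n i) ^ 2)⁻¹)
        = ∑ i ∈ Finset.Icc 1 n, (δ n i) ^ 2 := by
      filter_upwards [eventually_ge_atTop 1] with n hn
      rw [Finset.mul_sum]
      refine Finset.sum_congr rfl fun i _ => ?_
      rw [hδ' n hn i, div_pow, mul_pow]
      have hε2 : ((n : ℝ) ^ (-(1 / 4) : ℝ)) ^ 2 = (Real.sqrt n)⁻¹ := by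
        rw [← Real.rpow_natCast ((n : ℝ) ^ (-(1 / 4) : ℝ)) 2,
          ← Real.rpow_mul (Nat.cast_nonneg n)]
        rw [Real.sqrt_eq_rpow, ← Real.rpow_neg_one ((n:ℝ) ^ ((1:ℝ)/2))]
        rw [← Real.rpow_mul (Nat.cast_nonneg n)]
        norm_num
      rw [hε2]
      ring
    have hT := T_tendsto (σ := σ) (Υ := Υ) hσ hΥ
    have hfin : (2 * σ * h) ^ 2 * (1 / (4 * σ ^ 3 * Real.sqrt Υ))
        = h ^ 2 / (σ * Real.sqrt Υ) := by
      have hsq : Real.sqrt Υ ≠ 0 := (Real.sqrt_pos.2 hΥ).ne'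
      field_simp
      ring
    rw [← hfin]
    exact ((hcL.pow 2).mul hT).congr' hsum
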